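/- Let k be an algebraically closed field and let 1 ≤ d + 1 ≤ n. Let 𝒯 be a collection of (d+1)-element subsets of [n]. Then the following are equivalent: (i) for every (d+1)×n matrix A over k all of whose columns are nonzero, if the maximal minor m_H(A) vanishes for every H ∈ 𝒯, then rank A ≤ d; (ii) 𝒯 satisfies the transversality property. -/

import Mathlib

open Matrix


/-- A collection `𝒯` of subsets of `[n]` satisfies the transversality property (for
`k`-uniform hypergraphs) if for every partition of `[n]` into `k` nonempty parts
(encoded as a surjection `P : Fin n → Fin k`, the parts being the fibers), there is
an `H ∈ 𝒯` meeting every part in exactly one element. -/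
def Transversal (n k : ℕ) (𝒯 : Set (Finset (Fin n))) : Prop :=
  ∀ P : Fin n → Fin k, Function.Surjective P →
    ∃ H ∈ 𝒯, ∀ j : Fin k, (H.filter fun i => P i = j).card = 1

/-- Vectors adapted to a flag are linearly independent: if `z j ∈ F (j+1) \ F j` for a
monotone chain of submodules `F`, then the `z j` are linearly independent. -/
lemma flag_linearIndependent {k V : Type*} [Field k] [AddCommGroup V] [Module k V]
    {m : ℕ} (F : ℕ → Submodule k V) (hF : Monotone F) (z : Fin m → V)
    (hz1 : ∀ j : Fin m, z j ∈ F (j.1 + 1)) (hz2 : ∀ j : Fin m, z j ∉ F j.1) :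
    LinearIndependent k z := by
  rw [Fintype.linearIndependent_iff]
  intro g hg
  by_contra hne
  push_neg at hne
  obtain ⟨i0, hi0⟩ := hne
  classical
  set S : Finset (Fin m) := Finset.univ.filter (fun i => g i ≠ 0) with hS
  have hSne : S.Nonempty := ⟨i0, by simp [hS, hi0]⟩
  set M := S.max' hSne with hM
  have hgM : g M ≠ 0 := by
    have := S.max'_mem hSne; simpa [hS] using this
  have hsum : g M • z M + ∑ i ∈ Finset.univ.erase M, g i • z i = 0 := by
    rw [Finset.add_sum_erase Finset.univ (fun i => g i • z i) (Finset.mem_univ M)]; exact hg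
  have hmem : g M • z M ∈ F M.1 := by
    have heq : g M • z M = -∑ i ∈ Finset.univ.erase M, g i • z i :=
      eq_neg_of_add_eq_zero_left hsum
    rw [heq]
    refine Submodule.neg_mem _ (Submodule.sum_mem _ ?_)
    intro i hi
    by_cases hgi : g i = 0
    · simp [hgi]
    · have hiS : i ∈ S := by simp [hS, hgi]
      have hile : i ≤ M := S.le_max' i hiS
      have hine : i ≠ M := (Finset.mem_erase.mp hi).1
      have hilt : i.1 + 1 ≤ M.1 := by
        have : i < M := lt_of_le_of_ne hile hine
        exact Nat.succ_le_of_lt this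
      exact Submodule.smul_mem _ _ (hF hilt (hz1 i))
  have : z M ∈ F M.1 := by
    have := Submodule.smul_mem _ (g M)⁻¹ hmem
    rwa [inv_smul_smul₀ hgM] at this
  exact hz2 M this

/-- For a collection `𝒯` of `(d+1)`-element subsets of `[n]`, the maximal minors
`{m_H : H ∈ 𝒯}` cut out set-theoretically the locus of degenerate configurations
(matrices of rank ≤ d with nonzero columns) iff `𝒯` has the transversality
property. -/
theorem minors_cut_out_degenerate_iff_transversal {k : Type*} [Field k] [IsAlgClosed k]
    {d n : ℕ} (hd : 1 ≤ d + 1) (hn : d + 1 ≤ n)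
    (𝒯 : Set (Finset (Fin n))) (h𝒯 : ∀ H ∈ 𝒯, H.card = d + 1) :
    (∀ A : Matrix (Fin (d + 1)) (Fin n) k, (∀ i, (fun r => A r i) ≠ 0) →
        (∀ (H : Finset (Fin n)) (hH : H ∈ 𝒯),
          Matrix.det (Matrix.of fun r j => A r (H.orderEmbOfFin (h𝒯 H hH) j)) = 0) →
        A.rank ≤ d) ↔
      Transversal n (d + 1) 𝒯 := by
  classical
  constructor
  · -- condition ⇒ transversality
    intro hcond P hP
    by_contra hno
    push_neg at hno
    -- the matrix whose i-th column is the standard basis vector e_{P i}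
    set A : Matrix (Fin (d + 1)) (Fin n) k :=
      Matrix.of (fun r i => if P i = r then (1 : k) else 0) with hA
    have hcols : ∀ i, (fun r => A r i) ≠ 0 := by
      intro i h
      have := congrFun h (P i)
      simp [hA] at this
    have hmin : ∀ (H : Finset (Fin n)) (hH : H ∈ 𝒯),
        Matrix.det (Matrix.of fun r j => A r (H.orderEmbOfFin (h𝒯 H hH) j)) = 0 := by
      intro H hH
      set emb := H.orderEmbOfFin (h𝒯 H hH) with hemb
      set Q : Fin (d + 1) → Fin (d + 1) := fun l => P (emb l) with hQ
      -- Q is not injective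
      have hQni : ¬ Function.Injective Q := by
        intro hinj
        have hbij : Function.Bijective Q := (Finite.injective_iff_bijective).mp hinj
        obtain ⟨j, hj⟩ := hno H hH
        apply hj
        -- identify H with the image of emb
        have hHmap : Finset.univ.map ⟨emb, emb.injective⟩ = H := by
          apply Finset.eq_of_subset_of_card_le
          · intro x hx
            simp only [Finset.mem_map] at hx
            obtain ⟨l, -, rfl⟩ := hx
            exact H.orderEmbOfFin_mem (h𝒯 H hH) l
          · simp [h𝒯 H hH]
        have hfilter : H.filter (fun i => P i = j) =
            (Finset.univ.filter (fun l : Fin (d + 1) => Q l = j)).map ⟨emb, emb.injective⟩ := by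
          rw [← hHmap, Finset.filter_map]
          rfl
        rw [hfilter, Finset.card_map]
        let σ := Equiv.ofBijective Q hbij
        have : Finset.univ.filter (fun l : Fin (d + 1) => Q l = j) = {σ.symm j} := by
          ext l
          simp only [Finset.mem_filter, Finset.mem_univ, true_and, Finset.mem_singleton]
          exact (Equiv.eq_symm_apply σ).symm
        rw [this, Finset.card_singleton]
      -- two equal columns force the determinant to vanish
      rw [Function.not_injective_iff] at hQni
      obtain ⟨l1, l2, heq, hne⟩ := hQni
      apply Matrix.det_zero_of_column_eq (M := Matrix.of fun r j => A r (emb j)) hne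
      intro r
      simp only [Matrix.of_apply, hA]
      rw [show P (emb l1) = P (emb l2) from heq]
    have hrank := hcond A hcols hmin
    -- but A has full rank d + 1
    have hsurjspan : Submodule.span k (Set.range Aᵀ) = ⊤ := by
      apply eq_top_iff.mpr
      have hbasis := (Pi.basisFun k (Fin (d + 1))).span_eq
      rw [← hbasis]
      apply Submodule.span_mono
      rintro x ⟨j, rfl⟩
      obtain ⟨i, hi⟩ := hP j
      refine ⟨i, ?_⟩
      funext r
      simp [hA, Matrix.transpose_apply, Pi.basisFun_apply, Pi.single_apply, hi, eq_comm]
    have hrankA : A.rank = d + 1 := by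
      have h1 : A.rank = Module.finrank k (LinearMap.range A.mulVecLin) := rfl
      rw [h1, Matrix.range_mulVecLin, show Set.range A.col = Set.range Aᵀ from rfl, hsurjspan, finrank_top, Module.finrank_fin_fun]
    omega
  · -- transversality ⇒ condition
    intro htrans A hcols hminors
    by_contra hrank
    push_neg at hrank
    -- A has full rank, so its columns span k^{d+1}
    have hrk : A.rank = d + 1 := by
      have h1 : A.rank ≤ d + 1 := A.rank_le_card_height.trans (by simp)
      omega
    have hspan : Submodule.span k (Set.range Aᵀ) = ⊤ := by
      have h1 : A.rank = Module.finrank k (LinearMap.range A.mulVecLin) := rfl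
      rw [show Set.range Aᵀ = Set.range A.col from rfl, ← Matrix.range_mulVecLin]
      apply Submodule.eq_top_of_finrank_eq
      rw [← h1, hrk, Module.finrank_fin_fun]
    -- extract a basis among the columns
    obtain ⟨b, hbsub, hbspan, hbind⟩ := exists_linearIndependent k (Set.range Aᵀ)
    rw [hspan] at hbspan
    have hbfin : b.Finite := hbind.setFinite
    haveI := hbfin.fintype
    have hbcard : b.toFinset.card = d + 1 := by
      have := finrank_span_set_eq_card hbind
      rw [hbspan, finrank_top, Module.finrank_fin_fun] at this
      omega
    -- enumerate the basis
    let e : Fin (d + 1) ≃ {x // x ∈ b.toFinset} := (b.toFinset.equivFinOfCardEq hbcard).symm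
    let f : Fin (d + 1) → b := fun j => ⟨(e j).1, Set.mem_toFinset.mp (e j).2⟩
    have hfinj : Function.Injective f := by
      intro j1 j2 h
      have h' := congrArg Subtype.val h
      exact e.injective (Subtype.ext h')
    let w : Fin (d + 1) → (Fin (d + 1) → k) := fun j => (f j : Fin (d + 1) → k)
    have hwind : LinearIndependent k w := hbind.comp f hfinj
    have hwmem : ∀ j, w j ∈ b := fun j => (f j).2
    have hwrange : Set.range w = b := by
      apply Set.eq_of_subset_of_subset
      · rintro x ⟨j, rfl⟩; exact hwmem j
      · intro x hx
        refine ⟨e.symm ⟨x, Set.mem_toFinset.mpr hx⟩, ?_⟩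
        simp only [w, f]
        congr 1
        simp [e]
    -- the flag
    set F : ℕ → Submodule k (Fin (d + 1) → k) :=
      fun m => Submodule.span k (w '' {j : Fin (d + 1) | j.1 < m}) with hF
    have hFmono : Monotone F := by
      intro m1 m2 h
      exact Submodule.span_mono (Set.image_mono (fun j hj => lt_of_lt_of_le hj h))
    have hFtop : F (d + 1) = ⊤ := by
      have : {j : Fin (d + 1) | j.1 < d + 1} = Set.univ := by
        ext j; simp [j.2]; exact Nat.le_of_lt_succ j.2
      rw [hF]
      simp only [this, Set.image_univ, hwrange]
      rw [hbspan]
    have hF0 : F 0 = ⊥ := by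
      have : {j : Fin (d + 1) | j.1 < 0} = ∅ := by ext j; simp
      simp [hF, this]
    -- each column is nonzero hence has a well-defined level in the flag
    have hex : ∀ i : Fin n, ∃ m : ℕ, Aᵀ i ∈ F (m + 1) := by
      intro i
      exact ⟨d, by rw [hFtop]; trivial⟩
    have hexle : ∀ i : Fin n, Nat.find (hex i) ≤ d := by
      intro i
      exact Nat.find_le (by rw [hFtop]; trivial)
    set P : Fin n → Fin (d + 1) := fun i => ⟨Nat.find (hex i), Nat.lt_succ_of_le (hexle i)⟩
      with hPdef
    have hPmem : ∀ i, Aᵀ i ∈ F ((P i).1 + 1) := fun i => Nat.find_spec (hex i)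
    have hPnot : ∀ i, Aᵀ i ∉ F ((P i).1) := by
      intro i hmem
      rcases Nat.eq_zero_or_pos (Nat.find (hex i)) with h0 | hpos
      · have : Aᵀ i = 0 := by
          rw [hPdef] at hmem
          simp only [h0] at hmem
          rw [hF0] at hmem
          simpa using hmem
        apply hcols i
        funext r
        exact congrFun this r
      · have hlt : Nat.find (hex i) - 1 < Nat.find (hex i) := Nat.sub_lt hpos one_pos
        have := Nat.find_min (hex i) hlt
        apply this
        have : Nat.find (hex i) - 1 + 1 = Nat.find (hex i) := Nat.succ_pred_eq_of_pos hpos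
        rw [this]
        exact hmem
    -- P is surjective
    have hPsurj : Function.Surjective P := by
      intro j
      obtain ⟨i, hi⟩ : ∃ i, Aᵀ i = w j := by
        have := hbsub (hwmem j)
        obtain ⟨i, hi⟩ := this
        exact ⟨i, hi⟩
      refine ⟨i, ?_⟩
      have hle : Nat.find (hex i) ≤ j.1 := by
        apply Nat.find_le
        rw [hi]
        exact Submodule.subset_span ⟨j, by simp, rfl⟩
      have hge : j.1 ≤ Nat.find (hex i) := by
        by_contra hlt
        push_neg at hlt
        have hmem : Aᵀ i ∈ F (Nat.find (hex i) + 1) := Nat.find_spec (hex i)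
        have : w j ∈ F j.1 := by
          rw [← hi]
          exact hFmono (Nat.succ_le_of_lt hlt) hmem
        have hnot : w j ∉ Submodule.span k (w '' {l : Fin (d + 1) | l.1 < j.1}) :=
          hwind.notMem_span_image (by simp)
        exact hnot this
      exact Fin.ext (le_antisymm hle hge)
    -- apply transversality
    obtain ⟨H, hH, hHfib⟩ := htrans P hPsurj
    set emb := H.orderEmbOfFin (h𝒯 H hH) with hemb
    set Q : Fin (d + 1) → Fin (d + 1) := fun l => P (emb l) with hQ
    -- Q is injective (two elements in the same fiber would make the filter card ≥ 2)
    have hQinj : Function.Injective Q := by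
      intro l1 l2 h
      by_contra hne
      have h2 : ({emb l1, emb l2} : Finset (Fin n)) ⊆ H.filter (fun i => P i = Q l1) := by
        intro x hx
        rcases Finset.mem_insert.mp hx with rfl | hx
        · exact Finset.mem_filter.mpr ⟨H.orderEmbOfFin_mem (h𝒯 H hH) l1, rfl⟩
        · rw [Finset.mem_singleton] at hx
          subst hx
          exact Finset.mem_filter.mpr ⟨H.orderEmbOfFin_mem (h𝒯 H hH) l2, h.symm⟩
      have hcard2 : 2 ≤ (H.filter (fun i => P i = Q l1)).card := by
        have := Finset.card_le_card h2
        rwa [Finset.card_insert_of_notMem (by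
          simp only [Finset.mem_singleton]
          exact fun hc => hne (emb.injective hc)), Finset.card_singleton] at this
      rw [hHfib (Q l1)] at hcard2
      omega
    have hQbij : Function.Bijective Q := (Finite.injective_iff_bijective).mp hQinj
    let σ := Equiv.ofBijective Q hQbij
    -- the columns indexed by H, reordered along the flag, are independent
    let u : Fin (d + 1) → (Fin (d + 1) → k) := fun l => Aᵀ (emb l)
    let z : Fin (d + 1) → (Fin (d + 1) → k) := fun j => u (σ.symm j)
    have hz1 : ∀ j : Fin (d + 1), z j ∈ F (j.1 + 1) := by
      intro j
      have : Q (σ.symm j) = j := σ.apply_symm_apply j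
      have h1 := hPmem (emb (σ.symm j))
      rw [show P (emb (σ.symm j)) = j from this] at h1
      exact h1
    have hz2 : ∀ j : Fin (d + 1), z j ∉ F j.1 := by
      intro j
      have : Q (σ.symm j) = j := σ.apply_symm_apply j
      have h1 := hPnot (emb (σ.symm j))
      rw [show P (emb (σ.symm j)) = j from this] at h1
      exact h1
    have hzind : LinearIndependent k z := flag_linearIndependent F hFmono z hz1 hz2
    have huind : LinearIndependent k u := by
      have := hzind.comp σ σ.injective
      have heq : z ∘ σ = u := by
        funext l
        simp only [z, Function.comp_apply, Equiv.symm_apply_apply]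
      rwa [heq] at this
    -- hence the corresponding minor is nonzero, contradiction
    set M : Matrix (Fin (d + 1)) (Fin (d + 1)) k :=
      Matrix.of fun r j => A r (emb j) with hM
    have hMu : (fun l => Mᵀ l) = u := by
      funext l r
      rfl
    have hunit : IsUnit M := by
      rw [← Matrix.linearIndependent_cols_iff_isUnit]
      rw [show M.col = (fun l => Mᵀ l) from rfl, hMu]
      exact huind
    have hdet : M.det ≠ 0 := by
      have := (Matrix.isUnit_iff_isUnit_det M).mp hunit
      exact this.ne_zero
    exact hdet (hminors H hH)
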